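/- Let g, s ∈ R^n with g ≠ 0, B ∈ R^{n×n} symmetric with η1 I ⪯ B ⪯ η2 I for 0 < η1 ≤ η2, P = [−g s], u = (α, β) a solution of Pᵀ B P u = −Pᵀ g, and d = −α g + β s. Then gᵀ d ≤ −(η1/η2²)‖g‖². -/

import Mathlib

open Matrix

private lemma dp_self_nonneg {n : ℕ} (x : Fin n → ℝ) : 0 ≤ x ⬝ᵥ x :=
  Finset.sum_nonneg fun i _ => mul_self_nonneg _

theorem sufficient_descent
    (n : ℕ) (g s : Fin n → ℝ) (hg : g ≠ 0)
    (η₁ η₂ : ℝ) (hη₁ : 0 < η₁) (hη : η₁ ≤ η₂)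
    (B : Matrix (Fin n) (Fin n) ℝ) (hBsymm : B.IsSymm)
    (hB : ∀ x : Fin n → ℝ, η₁ * (x ⬝ᵥ x) ≤ x ⬝ᵥ (B *ᵥ x) ∧ x ⬝ᵥ (B *ᵥ x) ≤ η₂ * (x ⬝ᵥ x))
    (P : Matrix (Fin n) (Fin 2) ℝ) (hP : P = Matrix.of fun i => ![-g i, s i])
    (α β : ℝ) (hu : (Pᵀ * B * P) *ᵥ ![α, β] = -(Pᵀ *ᵥ g))
    (d : Fin n → ℝ) (hd : d = (-α) • g + β • s) :
    g ⬝ᵥ d ≤ -(η₁/η₂^2) * (g ⬝ᵥ g) := by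
  have hη₂ : 0 < η₂ := lt_of_lt_of_le hη₁ hη
  have hdu : P *ᵥ ![α, β] = d := by
    funext i
    simp [hP, hd, Matrix.mulVec, dotProduct, Fin.sum_univ_two]
    ring
  have hu' : Pᵀ *ᵥ (B *ᵥ d) = -(Pᵀ *ᵥ g) := by
    rw [← hdu, Matrix.mulVec_mulVec, Matrix.mulVec_mulVec]
    exact hu
  have hsym : ∀ x y : Fin n → ℝ, x ⬝ᵥ (B *ᵥ y) = y ⬝ᵥ (B *ᵥ x) := by
    intro x y
    rw [Matrix.dotProduct_mulVec, ← Matrix.mulVec_transpose, hBsymm.eq,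
      dotProduct_comm]
  -- key1 : dᵀ B d = - gᵀ d
  have key1 : d ⬝ᵥ (B *ᵥ d) = -(g ⬝ᵥ d) := by
    have h := congrArg (fun v => ![α, β] ⬝ᵥ v) hu'
    simp only [dotProduct_neg] at h
    rw [Matrix.dotProduct_mulVec ![α, β] Pᵀ (B *ᵥ d), Matrix.vecMul_transpose, hdu] at h
    rw [Matrix.dotProduct_mulVec ![α, β] Pᵀ g, Matrix.vecMul_transpose, hdu] at h
    rw [dotProduct_comm g d]
    exact h
  -- key2 : gᵀ B d = - gᵀ g
  have key2 : g ⬝ᵥ (B *ᵥ d) = -(g ⬝ᵥ g) := by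
    have h := congrFun hu' 0
    simp [Matrix.mulVec, dotProduct, hP] at h
    have h' : -(g ⬝ᵥ (B *ᵥ d)) = g ⬝ᵥ g := by
      simpa [dotProduct, Matrix.mulVec, neg_mul, Finset.sum_neg_distrib] using h
    linarith [h']
  -- Cauchy–Schwarz for the PSD bilinear form
  have hcs : (g ⬝ᵥ (B *ᵥ d))^2 ≤ (g ⬝ᵥ (B *ᵥ g)) * (d ⬝ᵥ (B *ᵥ d)) := by
    have hquad : ∀ t : ℝ, 0 ≤ (d ⬝ᵥ (B *ᵥ d)) * (t * t) + (2 * (g ⬝ᵥ (B *ᵥ d))) * t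
        + (g ⬝ᵥ (B *ᵥ g)) := by
      intro t
      have hx := (hB (g + t • d)).1
      have hxx : (0:ℝ) ≤ η₁ * ((g + t • d) ⬝ᵥ (g + t • d)) :=
        mul_nonneg hη₁.le (dp_self_nonneg _)
      have hnn : (0:ℝ) ≤ (g + t • d) ⬝ᵥ (B *ᵥ (g + t • d)) := le_trans hxx hx
      have hexp : (g + t • d) ⬝ᵥ (B *ᵥ (g + t • d)) =
          (d ⬝ᵥ (B *ᵥ d)) * (t * t) + (2 * (g ⬝ᵥ (B *ᵥ d))) * t + (g ⬝ᵥ (B *ᵥ g)) := by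
        simp only [Matrix.mulVec_add, Matrix.mulVec_smul, add_dotProduct,
          dotProduct_add, smul_dotProduct, dotProduct_smul,
          smul_eq_mul, hsym d g]
        ring
      rwa [hexp] at hnn
    have hdisc := discrim_le_zero hquad
    rw [discrim] at hdisc
    nlinarith [hdisc]
  have hg2 : 0 < g ⬝ᵥ g := by
    rcases (dp_self_nonneg g).lt_or_eq with h | h
    · exact h
    · exact absurd (dotProduct_self_eq_zero.mp h.symm) hg
  have hBg := (hB g).2
  have hBd := (hB d).1
  have hBd2 := (hB d).2
  have hdd : 0 ≤ d ⬝ᵥ d := dp_self_nonneg d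
  have hlow : g ⬝ᵥ g ≤ η₂^2 * (d ⬝ᵥ d) := by
    rw [key2] at hcs
    have hkey : (g ⬝ᵥ g)^2 ≤ (η₂ * (g ⬝ᵥ g)) * (η₂ * (d ⬝ᵥ d)) := by
      calc (g ⬝ᵥ g)^2 = (-(g ⬝ᵥ g))^2 := by ring
        _ ≤ (g ⬝ᵥ (B *ᵥ g)) * (d ⬝ᵥ (B *ᵥ d)) := hcs
        _ ≤ (η₂ * (g ⬝ᵥ g)) * (η₂ * (d ⬝ᵥ d)) := by
            have h1 : 0 ≤ d ⬝ᵥ (B *ᵥ d) :=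
              le_trans (mul_nonneg hη₁.le hdd) hBd
            have h2 : 0 ≤ g ⬝ᵥ (B *ᵥ g) :=
              le_trans (mul_nonneg hη₁.le (dp_self_nonneg g)) (hB g).1
            exact mul_le_mul hBg hBd2 h1 (by positivity)
    nlinarith [hkey, hg2]
  have hgd : g ⬝ᵥ d = -(d ⬝ᵥ (B *ᵥ d)) := by linarith [key1]
  rw [neg_mul, div_mul_eq_mul_div, ← neg_div,
    le_div_iff₀ (by positivity : (0:ℝ) < η₂^2)]
  nlinarith [hBd, hlow, mul_le_mul_of_nonneg_left hlow hη₁.le]
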